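/- Let n, k be real numbers with 0 < k < n. Then φ₋(n,k) < varphi(n,k) < φ₊(n,k). If in addition 1 ≤ k ≤ n - 1, then 1/√8 ≤ varphi(n,k) < 1/√(2π). -/

import Mathlib

open Real

/-- `varphi(n,k) = Γ(n+1)/(Γ(k+1)Γ(n-k+1)) · k^{k+1/2}(n-k)^{n-k+1/2}/n^{n+1/2}`. -/
noncomputable def varphi (n k : ℝ) : ℝ :=
  Real.Gamma (n + 1) / (Real.Gamma (k + 1) * Real.Gamma (n - k + 1)) *
    (k ^ (k + 1 / 2 : ℝ) * (n - k) ^ (n - k + 1 / 2 : ℝ) / n ^ (n + 1 / 2 : ℝ))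

/-- `φ₊(n,k)`. -/
noncomputable def phiPlus (n k : ℝ) : ℝ :=
  1 / Real.sqrt (2 * Real.pi) *
    Real.exp (1 / (12 * n + 1) - 1 / (12 * k + 1) - 1 / (12 * (n - k) + 1))

/-- `φ₋(n,k)`. -/
noncomputable def phiMinus (n k : ℝ) : ℝ :=
  1 / Real.sqrt (2 * Real.pi) *
    Real.exp (1 / (12 * n) - 1 / (12 * k) - 1 / (12 * (n - k)))

open Filter Finset Set Stirling Topology



noncomputable def dd (x : ℝ) : ℝ := (x + 1/2) * (Real.log (x+1) - Real.log x) - 1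

noncomputable def ddD (x : ℝ) : ℝ := Real.log (x+1) - Real.log x - (x + 1/2)/(x*(x+1))

noncomputable def ee (x : ℝ) : ℝ := 1/(12*x) - 1/(12*(x+1)) - dd x
noncomputable def qq (x : ℝ) : ℝ := dd x - (1/(12*x+1) - 1/(12*x+13))
noncomputable def LL (x : ℝ) : ℝ :=
  Real.log (Real.Gamma (x+1)) - (x + 1/2) * Real.log x + x - Real.log (Real.sqrt (2*Real.pi))


/-- upper bound: log((1+t)/(1-t)) < 2t + 2t^3/(3(1-t^2)) for 0<t<1 -/
lemma log_ratio_upper {t : ℝ} (ht : 0 < t) (ht1 : t < 1) :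
    Real.log (1+t) - Real.log (1-t) < 2*t + 2*t^3/(3*(1-t^2)) := by
  set A : ℝ → ℝ := fun y => 2*y + 2*y^3/(3*(1-y^2)) - (Real.log (1+y) - Real.log (1-y)) with hA
  have hder : ∀ y ∈ Ioo (-1:ℝ) 1, HasDerivAt A (4*y^4/(3*(1-y^2)^2)) y := by
    intro y hy
    obtain ⟨hy1, hy2⟩ := hy
    have hy1' : (0:ℝ) < 1 + y := by linarith
    have hy2' : (0:ℝ) < 1 - y := by linarith
    have hysq : (0:ℝ) < 1 - y^2 := by nlinarith
    have h1 : HasDerivAt (fun y : ℝ => Real.log (1+y)) (1/(1+y)) y := by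
      simpa [one_div, Function.comp_def] using (Real.hasDerivAt_log hy1'.ne').comp y ((hasDerivAt_id y).const_add 1)
    have h2 : HasDerivAt (fun y : ℝ => Real.log (1-y)) (-(1/(1-y))) y := by
      simpa [one_div, Function.comp_def] using (Real.hasDerivAt_log hy2'.ne').comp y ((hasDerivAt_id y).const_sub 1)
    have hnum : HasDerivAt (fun y : ℝ => 2*y^3) (2*(3*y^2)) y := by
      simpa using (hasDerivAt_pow 3 y).const_mul 2
    have hden : HasDerivAt (fun y : ℝ => 3*(1-y^2)) (3*(-(2*y))) y := by
      simpa using ((hasDerivAt_pow 2 y).const_sub 1).const_mul 3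
    have hden' : 3*(1-y^2) ≠ 0 := by positivity
    have hq := hnum.div hden hden'
    have hlin : HasDerivAt (fun y : ℝ => 2*y) 2 y := by
      simpa using (hasDerivAt_id y).const_mul 2
    have := (hlin.add hq).sub (h1.sub h2)
    refine this.congr_deriv ?_
    field_simp
    ring
  have hmono : StrictMonoOn A (Ico (0:ℝ) 1) := by
    apply strictMonoOn_of_deriv_pos (convex_Ico 0 1)
    · intro y hy
      exact (hder y ⟨by linarith [hy.1], hy.2⟩).continuousAt.continuousWithinAt
    · intro y hy
      rw [interior_Ico] at hy
      rw [(hder y ⟨by linarith [hy.1], hy.2⟩).deriv]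
      have hy0 : (0:ℝ) < y := hy.1
      have : (0:ℝ) < 1 - y^2 := by nlinarith [hy.1, hy.2]
      positivity
  have h0 : A 0 = 0 := by simp [hA]
  have := hmono (Set.left_mem_Ico.mpr one_pos) ⟨ht.le, ht1⟩ ht
  rw [h0] at this
  simp only [hA] at this
  linarith

/-- lower bound: log((1+t)/(1-t)) ≥ 2(t + t^3/3 + ... + t^13/13) for 0 ≤ t < 1 -/
lemma log_ratio_lower {t : ℝ} (ht : 0 ≤ t) (ht1 : t < 1) :
    2*(t + t^3/3 + t^5/5 + t^7/7 + t^9/9 + t^11/11 + t^13/13) ≤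
      Real.log (1+t) - Real.log (1-t) := by
  set B : ℝ → ℝ := fun y => (Real.log (1+y) - Real.log (1-y)) -
    2*(y + y^3/3 + y^5/5 + y^7/7 + y^9/9 + y^11/11 + y^13/13) with hB
  have hder : ∀ y ∈ Ioo (-1:ℝ) 1, HasDerivAt B (2*y^14/(1-y^2)) y := by
    intro y hy
    obtain ⟨hy1, hy2⟩ := hy
    have hy1' : (0:ℝ) < 1 + y := by linarith
    have hy2' : (0:ℝ) < 1 - y := by linarith
    have hysq : (0:ℝ) < 1 - y^2 := by nlinarith
    have h1 : HasDerivAt (fun y : ℝ => Real.log (1+y)) (1/(1+y)) y := by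
      simpa [one_div, Function.comp_def] using (Real.hasDerivAt_log hy1'.ne').comp y ((hasDerivAt_id y).const_add 1)
    have h2 : HasDerivAt (fun y : ℝ => Real.log (1-y)) (-(1/(1-y))) y := by
      simpa [one_div, Function.comp_def] using (Real.hasDerivAt_log hy2'.ne').comp y ((hasDerivAt_id y).const_sub 1)
    have hpoly : HasDerivAt (fun y : ℝ =>
        2*(y + y^3/3 + y^5/5 + y^7/7 + y^9/9 + y^11/11 + y^13/13))
        (2*(1 + (3*y^2)/3 + (5*y^4)/5 + (7*y^6)/7 + (9*y^8)/9 + (11*y^10)/11 + (13*y^12)/13)) y := by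
      have h := ((((((hasDerivAt_id y).add ((hasDerivAt_pow 3 y).div_const 3)).add
        ((hasDerivAt_pow 5 y).div_const 5)).add ((hasDerivAt_pow 7 y).div_const 7)).add
        ((hasDerivAt_pow 9 y).div_const 9)).add ((hasDerivAt_pow 11 y).div_const 11)).add
        ((hasDerivAt_pow 13 y).div_const 13)
      have h2 := h.const_mul 2
      refine h2.congr_deriv ?_
      norm_num
    have := (h1.sub h2).sub hpoly
    refine this.congr_deriv ?_
    field_simp
    ring
  have hmono : MonotoneOn B (Ico (0:ℝ) 1) := by
    apply monotoneOn_of_deriv_nonneg (convex_Ico 0 1)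
    · intro y hy
      exact (hder y ⟨by linarith [hy.1], hy.2⟩).continuousAt.continuousWithinAt
    · intro y hy
      rw [interior_Ico] at hy
      exact (hder y ⟨by linarith [hy.1], hy.2⟩).differentiableAt.differentiableWithinAt
    · intro y hy
      rw [interior_Ico] at hy
      rw [(hder y ⟨by linarith [hy.1], hy.2⟩).deriv]
      have : (0:ℝ) < 1 - y^2 := by nlinarith [hy.1, hy.2]
      positivity
  have h0 : B 0 = 0 := by simp [hB]
  have := hmono (Set.left_mem_Ico.mpr one_pos) ⟨ht, ht1⟩ ht
  rw [h0] at this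
  simp only [hB] at this
  linarith


lemma key_t_facts {x : ℝ} (hx : 0 < x) :
    Real.log (1+(1/(2*x+1))) - Real.log (1-(1/(2*x+1))) = Real.log (x+1) - Real.log x := by
  have h1 : (0:ℝ) < 2*x+1 := by linarith
  have e1 : (1:ℝ)+(1/(2*x+1)) = (2*(x+1))/(2*x+1) := by field_simp; ring
  have e2 : (1:ℝ)-(1/(2*x+1)) = (2*x)/(2*x+1) := by field_simp; ring
  rw [e1, e2, Real.log_div (by positivity) h1.ne', Real.log_div (by positivity) h1.ne',
    Real.log_mul (by norm_num) (by positivity), Real.log_mul (by norm_num) hx.ne']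
  ring

lemma key_log_lt {x : ℝ} (hx : 0 < x) :
    Real.log (x+1) - Real.log x
      < 2*(1/(2*x+1)) + 2*(1/(2*x+1))^3/(3*(1-(1/(2*x+1))^2)) := by
  have h1 : (0:ℝ) < 2*x+1 := by linarith
  have ht : 0 < 1/(2*x+1) := by positivity
  have ht1 : 1/(2*x+1) < 1 := by rw [div_lt_one h1]; linarith
  have := log_ratio_upper ht ht1
  rwa [key_t_facts hx] at this

lemma key_log_ge {x : ℝ} (hx : 0 < x) :
    2*((1/(2*x+1)) + (1/(2*x+1))^3/3 + (1/(2*x+1))^5/5 + (1/(2*x+1))^7/7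
      + (1/(2*x+1))^9/9 + (1/(2*x+1))^11/11 + (1/(2*x+1))^13/13)
      ≤ Real.log (x+1) - Real.log x := by
  have h1 : (0:ℝ) < 2*x+1 := by linarith
  have ht : 0 ≤ 1/(2*x+1) := by positivity
  have ht1 : 1/(2*x+1) < 1 := by rw [div_lt_one h1]; linarith
  have := log_ratio_lower ht ht1
  rwa [key_t_facts hx] at this

lemma tsq_rw {x : ℝ} (hx : 0 < x) :
    1 - (1/(2*x+1))^2 = (4*x*(x+1))/(2*x+1)^2 := by
  have h1 : (2*x+1) ≠ 0 := by positivity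
  field_simp
  ring

lemma ee_pos {x : ℝ} (hx : 0 < x) : 0 < ee x := by
  have h1 : (2*x+1) ≠ 0 := by positivity
  have hx1 : (x+1) ≠ 0 := by positivity
  have hmul : (0:ℝ) < x + 1/2 := by linarith
  have h := key_log_lt hx
  have hid : (x+1/2)*(2*(1/(2*x+1)) + 2*(1/(2*x+1))^3/(3*(1-(1/(2*x+1))^2))) - 1
      = 1/(12*x) - 1/(12*(x+1)) := by
    rw [tsq_rw hx]
    field_simp
    ring
  have := mul_lt_mul_of_pos_left h hmul
  unfold ee dd
  nlinarith [this, hid]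

lemma qq_pos {x : ℝ} (hx : 0 < x) : 0 < qq x := by
  have h1 : (2*x+1) ≠ 0 := by positivity
  have h2 : (12*x+1) ≠ 0 := by positivity
  have h3 : (12*x+13) ≠ 0 := by positivity
  have hmul : (0:ℝ) ≤ x + 1/2 := by linarith
  have h := key_log_ge hx
  have hid : (x+1/2)*(2*((1/(2*x+1)) + (1/(2*x+1))^3/3 + (1/(2*x+1))^5/5 + (1/(2*x+1))^7/7
      + (1/(2*x+1))^9/9 + (1/(2*x+1))^11/11 + (1/(2*x+1))^13/13)) - 1
      - (1/(12*x+1) - 1/(12*x+13))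
      = (18772 + 1770164*x + 15657012*x^2 + 98579936*x^3 + 436360288*x^4 + 1372443072*x^5
        + 3086411328*x^6 + 4942738944*x^7 + 5520632832*x^8 + 4099070976*x^9
        + 1823517696*x^10 + 369008640*x^11)
        / (45045*(2*x+1)^12*(12*x+1)*(12*x+13)) := by
    field_simp
    ring
  have hpos : (0:ℝ) < (18772 + 1770164*x + 15657012*x^2 + 98579936*x^3 + 436360288*x^4
      + 1372443072*x^5 + 3086411328*x^6 + 4942738944*x^7 + 5520632832*x^8 + 4099070976*x^9
      + 1823517696*x^10 + 369008640*x^11)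
      / (45045*(2*x+1)^12*(12*x+1)*(12*x+13)) := by positivity
  have := mul_le_mul_of_nonneg_left h hmul
  unfold qq dd
  nlinarith [this, hid, hpos]

lemma hasDerivAt_dd {x : ℝ} (hx : 0 < x) : HasDerivAt dd (ddD x) x := by
  have hx1 : (0:ℝ) < x + 1 := by linarith
  have h1 : HasDerivAt (fun y : ℝ => Real.log (y+1)) ((x+1)⁻¹) x := by
    simpa [Function.comp_def] using (Real.hasDerivAt_log hx1.ne').comp x ((hasDerivAt_id x).add_const 1)
  have h2 : HasDerivAt Real.log x⁻¹ x := Real.hasDerivAt_log hx.ne'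
  have h3 : HasDerivAt (fun y : ℝ => y + 1/2) 1 x := (hasDerivAt_id x).add_const (1/2)
  have h := (h3.mul (h1.sub h2)).sub_const 1
  have : dd = fun y : ℝ => (y + 1/2) * (Real.log (y+1) - Real.log y) - 1 := rfl
  rw [this]
  refine h.congr_deriv ?_
  unfold ddD
  simp only [Pi.sub_apply]
  field_simp
  ring

lemma hasDerivAt_ddD {x : ℝ} (hx : 0 < x) : HasDerivAt ddD (1/(2*x^2*(x+1)^2)) x := by
  have hx1 : (0:ℝ) < x + 1 := by linarith
  have hxx : x*(x+1) ≠ 0 := by positivity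
  have h1 : HasDerivAt (fun y : ℝ => Real.log (y+1)) ((x+1)⁻¹) x := by
    simpa [Function.comp_def] using (Real.hasDerivAt_log hx1.ne').comp x ((hasDerivAt_id x).add_const 1)
  have h2 : HasDerivAt Real.log x⁻¹ x := Real.hasDerivAt_log hx.ne'
  have hnum : HasDerivAt (fun y : ℝ => y + 1/2) 1 x := (hasDerivAt_id x).add_const (1/2)
  have hden : HasDerivAt (fun y : ℝ => y*(y+1)) (1*(x+1) + x*1) x :=
    (hasDerivAt_id x).mul ((hasDerivAt_id x).add_const 1)
  have h := (h1.sub h2).sub (hnum.div hden hxx)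
  have : ddD = fun y : ℝ => Real.log (y+1) - Real.log y - (y + 1/2)/(y*(y+1)) := rfl
  rw [this]
  refine h.congr_deriv ?_
  field_simp
  ring

lemma ddD_mono : MonotoneOn ddD (Set.Ioi (0:ℝ)) := by
  apply monotoneOn_of_deriv_nonneg (convex_Ioi 0)
  · intro y hy
    exact (hasDerivAt_ddD hy).continuousAt.continuousWithinAt
  · intro y hy
    rw [interior_Ioi] at hy
    exact (hasDerivAt_ddD hy).differentiableAt.differentiableWithinAt
  · intro y hy
    rw [interior_Ioi] at hy
    rw [(hasDerivAt_ddD hy).deriv]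
    have : (0:ℝ) < y := hy
    positivity

lemma ddD_lt {x : ℝ} (hx : 0 < x) : ddD x < -(1/(3*x*(x+1)*(2*x+1))) := by
  have h1 : (2*x+1) ≠ 0 := by positivity
  have hx1 : (x+1) ≠ 0 := by positivity
  have h := key_log_lt hx
  have hid : (2*(1/(2*x+1)) + 2*(1/(2*x+1))^3/(3*(1-(1/(2*x+1))^2))) - (x+1/2)/(x*(x+1))
      = -(1/(3*x*(x+1)*(2*x+1))) := by
    rw [tsq_rw hx]
    field_simp
    ring
  unfold ddD
  linarith [hid, h]

lemma hasDerivAt_inv_lin {x a b : ℝ} (hab : a*x+b ≠ 0) :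
    HasDerivAt (fun y : ℝ => 1/(a*y+b)) (-(a/(a*x+b)^2)) x := by
  have h := (hasDerivAt_const x (1:ℝ)).div (((hasDerivAt_id x).const_mul a).add_const b) hab
  refine h.congr_deriv ?_
  simp
  ring

lemma qq_anti : AntitoneOn qq (Set.Ioi (0:ℝ)) := by
  have hder : ∀ y : ℝ, 0 < y →
      HasDerivAt qq (ddD y - (-(12/(12*y+1)^2) - -(12/(12*y+13)^2))) y := by
    intro y hy
    have h2 : (12*y+1) ≠ 0 := by positivity
    have h3 : (12*y+13) ≠ 0 := by positivity
    have ha1 := hasDerivAt_inv_lin (x := y) (a := 12) (b := 1) h2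
    have ha2 := hasDerivAt_inv_lin (x := y) (a := 12) (b := 13) h3
    have h := (hasDerivAt_dd hy).sub (ha1.sub ha2)
    have : qq = fun z : ℝ => dd z - (1/(12*z+1) - 1/(12*z+13)) := rfl
    rw [this]
    exact h
  apply antitoneOn_of_deriv_nonpos (convex_Ioi 0)
  · intro y hy
    exact (hder y hy).continuousAt.continuousWithinAt
  · intro y hy
    rw [interior_Ioi] at hy
    exact (hder y hy).differentiableAt.differentiableWithinAt
  · intro y hy
    rw [interior_Ioi] at hy
    rw [(hder y hy).deriv]
    have hy' : (0:ℝ) < y := hy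
    have hfrac : 12/(12*y+1)^2 - 12/(12*y+13)^2 ≤ 1/(3*y*(y+1)*(2*y+1)) := by
      have h2 : (12*y+1) ≠ 0 := by positivity
      have h3 : (12*y+13) ≠ 0 := by positivity
      have hy1 : (y+1) ≠ 0 := by positivity
      have h1 : (2*y+1) ≠ 0 := by positivity
      have hid : 1/(3*y*(y+1)*(2*y+1)) - (12/(12*y+1)^2 - 12/(12*y+13)^2)
          = (5184*y^3+3456*y^2-1680*y+169)
            / (3*y*(y+1)*(2*y+1)*(12*y+1)^2*(12*y+13)^2) := by
        field_simp
        ring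
      have hnum : (0:ℝ) ≤ 5184*y^3+3456*y^2-1680*y+169 := by
        nlinarith [mul_nonneg hy'.le (sq_nonneg (72*y-12)), sq_nonneg (72*y-38/3)]
      have hden : (0:ℝ) < 3*y*(y+1)*(2*y+1)*(12*y+1)^2*(12*y+13)^2 := by positivity
      nlinarith [hid, div_nonneg hnum hden.le]
    linarith [ddD_lt hy', hfrac]

lemma ee_anti : AntitoneOn ee (Set.Ioi (0:ℝ)) := by
  have hder : ∀ y : ℝ, 0 < y →
      HasDerivAt ee (-(12/(12*y)^2) - -(12/(12*(y+1))^2) - ddD y) y := by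
    intro y hy
    have h2 : 12*y ≠ 0 := by positivity
    have h3 : (12*(y+1)) ≠ 0 := by positivity
    have ha1 : HasDerivAt (fun z : ℝ => 1/(12*z)) (-(12/(12*y)^2)) y := by
      simpa using hasDerivAt_inv_lin (x := y) (a := 12) (b := 0) (by simpa using h2)
    have ha2 : HasDerivAt (fun z : ℝ => 1/(12*(z+1))) (-(12/(12*(y+1))^2)) y := by
      have := hasDerivAt_inv_lin (x := y) (a := 12) (b := 12) (by linarith [hy] : 12*y+12 ≠ 0)
      convert this using 2 <;> ring
    have h := (ha1.sub ha2).sub (hasDerivAt_dd hy)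
    have : ee = fun z : ℝ => 1/(12*z) - 1/(12*(z+1)) - dd z := rfl
    rw [this]
    exact h
  apply antitoneOn_of_deriv_nonpos (convex_Ioi 0)
  · intro y hy
    exact (hder y hy).continuousAt.continuousWithinAt
  · intro y hy
    rw [interior_Ioi] at hy
    exact (hder y hy).differentiableAt.differentiableWithinAt
  · intro y hy
    rw [interior_Ioi] at hy
    rw [(hder y hy).deriv]
    have hy' : (0:ℝ) < y := hy
    have h1 : (2*y+1) ≠ 0 := by positivity
    have hy1 : (y+1) ≠ 0 := by positivity
    have h := key_log_ge hy'
    have hid : 2*((1/(2*y+1)) + (1/(2*y+1))^3/3 + (1/(2*y+1))^5/5 + (1/(2*y+1))^7/7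
        + (1/(2*y+1))^9/9 + (1/(2*y+1))^11/11 + (1/(2*y+1))^13/13)
        - (y+1/2)/(y*(y+1)) + 12/(12*y)^2 - 12/(12*(y+1))^2
        = (45045 + 990990*y + 10672206*y^2 + 69272448*y^3 + 304818240*y^4 + 958034688*y^5
          + 2203339008*y^6 + 3734016000*y^7 + 4626226176*y^8 + 4085452800*y^9
          + 2440728576*y^10 + 885620736*y^11 + 147603456*y^12)
          / (540540*y^2*(y+1)^2*(2*y+1)^13) := by
      field_simp
      ring
    have hpos : (0:ℝ) ≤ (45045 + 990990*y + 10672206*y^2 + 69272448*y^3 + 304818240*y^4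
        + 958034688*y^5 + 2203339008*y^6 + 3734016000*y^7 + 4626226176*y^8 + 4085452800*y^9
        + 2440728576*y^10 + 885620736*y^11 + 147603456*y^12)
        / (540540*y^2*(y+1)^2*(2*y+1)^13) := by positivity
    unfold ddD
    linarith [h, hid, hpos]


lemma sum_dd_closed (x : ℝ) (N : ℕ) :
    ∑ j ∈ Finset.range (N+1), dd (x + j) =
      (x + N + 1/2) * Real.log (x + N + 1) - (x + 1/2) * Real.log x
        - (∑ j ∈ Finset.range N, Real.log (x + 1 + j)) - (N + 1) := by
  induction N with
  | zero => simp [dd]; ring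
  | succ M ih =>
      rw [Finset.sum_range_succ, ih, Finset.sum_range_succ]
      simp only [dd]
      push_cast
      ring_nf

lemma log_gammaSeq (x : ℝ) (hx : 0 < x) (N : ℕ) :
    Real.log (Real.GammaSeq x (N+1)) =
      x * Real.log (N+1) + Real.log (Nat.factorial (N+1) : ℝ) - ∑ j ∈ Finset.range (N+2), Real.log (x + j) := by
  have hN : (0:ℝ) < ((N+1:ℕ) : ℝ) := by positivity
  have hfac : ((Nat.factorial (N+1) : ℕ) : ℝ) ≠ 0 := by positivity
  have hterm : ∀ j ∈ Finset.range (N+1+1), x + (j:ℝ) ≠ 0 := by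
    intro j _
    positivity
  have hprod : (∏ j ∈ Finset.range (N+1+1), (x + (j:ℝ))) ≠ 0 := Finset.prod_ne_zero_iff.2 hterm
  rw [Real.GammaSeq, Real.log_div (by positivity) hprod, Real.log_mul (by positivity) hfac,
    Real.log_rpow hN, Real.log_prod hterm]
  push_cast
  ring_nf

lemma key_identity (x : ℝ) (hx : 0 < x) (N : ℕ) :
    ∑ j ∈ Finset.range (N+2), dd (x + j) =
      Real.log (Real.GammaSeq x (N+1))
        + (((N:ℝ)+1) * Real.log (1 + (x+1)/((N:ℝ)+1))
            + (x + 1/2) * Real.log (1 + (x+1)/((N:ℝ)+1)))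
        - (Real.log (stirlingSeq (N+1)) + 1/2 * Real.log 2)
        - (x - 1/2) * Real.log x - 1 := by
  have hN : (0:ℝ) < (N:ℝ)+1 := by positivity
  have h1 := sum_dd_closed x (N+1)
  have h2 := log_gammaSeq x hx N
  have h3 : (∑ j ∈ Finset.range (N+2), Real.log (x+j)) =
      (∑ j ∈ Finset.range (N+1), Real.log (x+1+j)) + Real.log x := by
    rw [Finset.sum_range_succ' (fun j => Real.log (x + j)) (N+1)]
    congr 1
    · exact Finset.sum_congr rfl fun j _ => by push_cast; ring_nf
    · norm_num
  have h4 := Stirling.log_stirlingSeq_formula (N+1)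
  have h5 : Real.log (2*((N:ℝ)+1)) = Real.log 2 + Real.log ((N:ℝ)+1) :=
    Real.log_mul (by norm_num) hN.ne'
  have h6 : Real.log (((N:ℝ)+1)/Real.exp 1) = Real.log ((N:ℝ)+1) - 1 := by
    rw [Real.log_div hN.ne' (Real.exp_ne_zero 1), Real.log_exp]
  have h7 : Real.log (1 + (x+1)/((N:ℝ)+1)) = Real.log (x + (N:ℝ) + 2) - Real.log ((N:ℝ)+1) := by
    have harg : 1 + (x+1)/((N:ℝ)+1) = (x + (N:ℝ) + 2)/((N:ℝ)+1) := by
      field_simp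
      ring
    rw [harg, Real.log_div (by positivity) hN.ne']
  push_cast at h1 h2 h4 ⊢
  rw [show x + ((N:ℝ) + 1) + 1 = x + (N:ℝ) + 2 from by ring] at h1
  rw [h7]
  linear_combination h1 - h2 + h3 + h4 - (1/2) * h5 - ((N:ℝ)+1) * h6

lemma tendsto_sum_dd (x : ℝ) (hx : 0 < x) :
    Tendsto (fun N : ℕ => ∑ j ∈ Finset.range N, dd (x + j)) atTop (𝓝 (LL x)) := by
  have hG : (0:ℝ) < Real.Gamma x := Real.Gamma_pos_of_pos hx
  have hNcast : Tendsto (fun N : ℕ => (N:ℝ)+1) atTop atTop :=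
    tendsto_atTop_add_const_right _ 1 tendsto_natCast_atTop_atTop
  have t1 : Tendsto (fun N : ℕ => Real.log (Real.GammaSeq x (N+1))) atTop
      (𝓝 (Real.log (Real.Gamma x))) :=
    (((Real.GammaSeq_tendsto_Gamma x).comp (tendsto_add_atTop_nat 1))).log hG.ne'
  have t2a : Tendsto (fun N : ℕ => ((N:ℝ)+1) * Real.log (1 + (x+1)/((N:ℝ)+1))) atTop
      (𝓝 (x+1)) := (tendsto_mul_log_one_add_div_atTop (x+1)).comp hNcast
  have t2c : Tendsto (fun N : ℕ => Real.log (1 + (x+1)/((N:ℝ)+1))) atTop (𝓝 0) := by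
    have h0 : Tendsto (fun N : ℕ => (x+1)/((N:ℝ)+1)) atTop (𝓝 0) :=
      Filter.Tendsto.div_atTop tendsto_const_nhds hNcast
    have h1 : Tendsto (fun N : ℕ => 1 + (x+1)/((N:ℝ)+1)) atTop (𝓝 1) := by
      simpa using (tendsto_const_nhds (x := (1:ℝ)) (f := atTop)).add h0
    have := h1.log one_ne_zero
    simpa using this
  have t2b : Tendsto (fun N : ℕ => (x + 1/2) * Real.log (1 + (x+1)/((N:ℝ)+1))) atTop (𝓝 0) := by
    simpa using t2c.const_mul (x + 1/2)
  have hval : Real.log (Real.sqrt (2*Real.pi)) = Real.log (Real.sqrt Real.pi) + 1/2 * Real.log 2 := by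
    rw [show (2:ℝ)*Real.pi = Real.pi*2 from mul_comm _ _, Real.sqrt_mul Real.pi_pos.le,
      Real.log_mul (Real.sqrt_pos.mpr Real.pi_pos).ne' (by positivity), Real.log_sqrt (show (0:ℝ) ≤ 2 by norm_num)]
    ring
  have t3 : Tendsto (fun N : ℕ => Real.log (stirlingSeq (N+1)) + 1/2 * Real.log 2) atTop
      (𝓝 (Real.log (Real.sqrt (2*Real.pi)))) := by
    rw [hval]
    exact ((tendsto_stirlingSeq_sqrt_pi.comp (tendsto_add_atTop_nat 1)).log
      (Real.sqrt_pos.mpr Real.pi_pos).ne').add_const _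
  have tall : Tendsto (fun N : ℕ =>
      Real.log (Real.GammaSeq x (N+1))
        + (((N:ℝ)+1) * Real.log (1 + (x+1)/((N:ℝ)+1))
            + (x + 1/2) * Real.log (1 + (x+1)/((N:ℝ)+1)))
        - (Real.log (stirlingSeq (N+1)) + 1/2 * Real.log 2)
        - (x - 1/2) * Real.log x - 1) atTop
      (𝓝 (Real.log (Real.Gamma x) + ((x+1) + 0) - Real.log (Real.sqrt (2*Real.pi))
        - (x - 1/2) * Real.log x - 1)) :=
    (((t1.add (t2a.add t2b)).sub t3).sub_const _).sub_const _
  have hLL : Real.log (Real.Gamma x) + ((x+1) + 0) - Real.log (Real.sqrt (2*Real.pi))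
      - (x - 1/2) * Real.log x - 1 = LL x := by
    unfold LL
    rw [Real.Gamma_add_one hx.ne', Real.log_mul hx.ne' hG.ne']
    ring
  rw [hLL] at tall
  have := tall.congr (fun N => (key_identity x hx N).symm)
  exact (tendsto_add_atTop_iff_nat 2).mp this


lemma tendsto_one_div_shift (a b x : ℝ) (ha : 0 < a) :
    Tendsto (fun N : ℕ => 1/(a*(x+(N:ℝ))+b)) atTop (𝓝 0) := by
  have h0 : Tendsto (fun N : ℕ => a*(N:ℝ)) atTop atTop :=
    (tendsto_natCast_atTop_atTop (R := ℝ)).const_mul_atTop ha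
  have h1 : Tendsto (fun N : ℕ => a*(N:ℝ) + (a*x+b)) atTop atTop :=
    tendsto_atTop_add_const_right atTop (a*x+b) h0
  have h2 : Tendsto (fun N : ℕ => a*(x+(N:ℝ))+b) atTop atTop :=
    h1.congr (fun N => by ring)
  have := h2.inv_tendsto_atTop
  exact this.congr (fun N => by simp [one_div])

lemma tel_w (x : ℝ) (N : ℕ) :
    ∑ j ∈ Finset.range N, (1/(12*(x+(j:ℝ))) - 1/(12*((x+(j:ℝ))+1)))
      = 1/(12*x) - 1/(12*(x+(N:ℝ))) := by
  induction N with
  | zero => simp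
  | succ M ih =>
      rw [Finset.sum_range_succ, ih]
      push_cast
      ring_nf

lemma tel_r (x : ℝ) (N : ℕ) :
    ∑ j ∈ Finset.range N, (1/(12*(x+(j:ℝ))+1) - 1/(12*(x+(j:ℝ))+13))
      = 1/(12*x+1) - 1/(12*(x+(N:ℝ))+1) := by
  induction N with
  | zero => simp
  | succ M ih =>
      rw [Finset.sum_range_succ, ih]
      push_cast
      ring_nf

lemma tendsto_sum_ee (x : ℝ) (hx : 0 < x) :
    Tendsto (fun N : ℕ => ∑ j ∈ Finset.range N, ee (x+j)) atTop (𝓝 (1/(12*x) - LL x)) := by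
  have hexp : ∀ N : ℕ, ∑ j ∈ Finset.range N, ee (x+j)
      = (1/(12*x) - 1/(12*(x+(N:ℝ)))) - ∑ j ∈ Finset.range N, dd (x+j) := by
    intro N
    rw [← tel_w x N, ← Finset.sum_sub_distrib]
    exact Finset.sum_congr rfl fun j _ => rfl
  have h2 : Tendsto (fun N : ℕ => 1/(12*(x+(N:ℝ)))) atTop (𝓝 0) := by
    have := tendsto_one_div_shift 12 0 x (by norm_num)
    exact this.congr (fun N => by norm_num)
  have := ((tendsto_const_nhds (x := 1/(12*x)) (f := atTop)).sub h2).sub (tendsto_sum_dd x hx)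
  simp only [sub_zero] at this
  exact this.congr (fun N => (hexp N).symm)

lemma tendsto_sum_qq (x : ℝ) (hx : 0 < x) :
    Tendsto (fun N : ℕ => ∑ j ∈ Finset.range N, qq (x+j)) atTop (𝓝 (LL x - 1/(12*x+1))) := by
  have hexp : ∀ N : ℕ, ∑ j ∈ Finset.range N, qq (x+j)
      = (∑ j ∈ Finset.range N, dd (x+j)) - (1/(12*x+1) - 1/(12*(x+(N:ℝ))+1)) := by
    intro N
    rw [← tel_r x N, ← Finset.sum_sub_distrib]
    exact Finset.sum_congr rfl fun j _ => rfl
  have h2 : Tendsto (fun N : ℕ => 1/(12*(x+(N:ℝ))+1)) atTop (𝓝 0) :=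
    tendsto_one_div_shift 12 1 x (by norm_num)
  have := (tendsto_sum_dd x hx).sub
    ((tendsto_const_nhds (x := 1/(12*x+1)) (f := atTop)).sub h2)
  simp only [sub_zero] at this
  exact this.congr (fun N => (hexp N).symm)

lemma lemA (n k : ℝ) (hk : 0 < k) (hkn : k < n) :
    1/(12*n) - 1/(12*k) - 1/(12*(n-k)) < LL n - LL k - LL (n-k) := by
  have hn : 0 < n := hk.trans hkn
  have hnk : 0 < n - k := by linarith
  have T := ((tendsto_sum_ee k hk).add (tendsto_sum_ee (n-k) hnk)).sub (tendsto_sum_ee n hn)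
  have hlb : ee (n-k) ≤ (1/(12*k) - LL k) + (1/(12*(n-k)) - LL (n-k)) - (1/(12*n) - LL n) := by
    apply ge_of_tendsto T
    filter_upwards [eventually_ge_atTop 1] with N hN
    have h1 : ∑ j ∈ Finset.range N, ee (n+j) ≤ ∑ j ∈ Finset.range N, ee (k+j) := by
      apply Finset.sum_le_sum
      intro j _
      have hj : (0:ℝ) ≤ j := Nat.cast_nonneg j
      exact ee_anti (by simp only [Set.mem_Ioi]; linarith) (by simp only [Set.mem_Ioi]; linarith)
        (by linarith)
    have h2 : ee (n-k) ≤ ∑ j ∈ Finset.range N, ee ((n-k)+j) := by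
      have h0mem : (0:ℕ) ∈ Finset.range N := Finset.mem_range.mpr (by omega)
      have := Finset.single_le_sum (f := fun j : ℕ => ee ((n-k)+j))
        (fun j _ => (ee_pos (by have : (0:ℝ) ≤ j := Nat.cast_nonneg j; linarith)).le) h0mem
      simpa using this
    linarith
  have := ee_pos hnk
  linarith

lemma lemB (n k : ℝ) (hk : 0 < k) (hkn : k < n) :
    LL n - LL k - LL (n-k) < 1/(12*n+1) - 1/(12*k+1) - 1/(12*(n-k)+1) := by
  have hn : 0 < n := hk.trans hkn
  have hnk : 0 < n - k := by linarith
  have T := ((tendsto_sum_qq k hk).add (tendsto_sum_qq (n-k) hnk)).sub (tendsto_sum_qq n hn)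
  have hlb : qq (n-k) ≤ (LL k - 1/(12*k+1)) + (LL (n-k) - 1/(12*(n-k)+1)) - (LL n - 1/(12*n+1)) := by
    apply ge_of_tendsto T
    filter_upwards [eventually_ge_atTop 1] with N hN
    have h1 : ∑ j ∈ Finset.range N, qq (n+j) ≤ ∑ j ∈ Finset.range N, qq (k+j) := by
      apply Finset.sum_le_sum
      intro j _
      have hj : (0:ℝ) ≤ j := Nat.cast_nonneg j
      exact qq_anti (by simp only [Set.mem_Ioi]; linarith) (by simp only [Set.mem_Ioi]; linarith)
        (by linarith)
    have h2 : qq (n-k) ≤ ∑ j ∈ Finset.range N, qq ((n-k)+j) := by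
      have h0mem : (0:ℕ) ∈ Finset.range N := Finset.mem_range.mpr (by omega)
      have := Finset.single_le_sum (f := fun j : ℕ => qq ((n-k)+j))
        (fun j _ => (qq_pos (by have : (0:ℝ) ≤ j := Nat.cast_nonneg j; linarith)).le) h0mem
      simpa using this
    linarith
  have := qq_pos hnk
  linarith

lemma LL_mono (c m' m : ℝ) (hc : 0 < c) (h1 : c < m') (h2 : m' ≤ m) :
    LL m' - LL (m'-c) ≤ LL m - LL (m-c) := by
  have hm' : 0 < m' := hc.trans h1
  have hm : 0 < m := lt_of_lt_of_le hm' h2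
  have hmc' : 0 < m' - c := by linarith
  have hmc : 0 < m - c := by linarith
  have hphi : AntitoneOn (fun y => dd y - dd (y+c)) (Set.Ioi (0:ℝ)) := by
    have hder : ∀ y : ℝ, 0 < y → HasDerivAt (fun y => dd y - dd (y+c)) (ddD y - ddD (y+c)) y := by
      intro y hy
      have h1 : HasDerivAt (fun z : ℝ => dd (z+c)) (ddD (y+c)) y := by
        simpa [Function.comp_def] using (hasDerivAt_dd (by linarith : (0:ℝ) < y + c)).comp y
          ((hasDerivAt_id y).add_const c)
      exact (hasDerivAt_dd hy).sub h1
    apply antitoneOn_of_deriv_nonpos (convex_Ioi 0)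
    · intro y hy
      exact (hder y hy).continuousAt.continuousWithinAt
    · intro y hy
      rw [interior_Ioi] at hy
      exact (hder y hy).differentiableAt.differentiableWithinAt
    · intro y hy
      rw [interior_Ioi] at hy
      have hy' : (0:ℝ) < y := hy
      rw [(hder y hy').deriv]
      have := ddD_mono (Set.mem_Ioi.mpr hy') (Set.mem_Ioi.mpr (by linarith : (0:ℝ) < y + c))
        (by linarith : y ≤ y + c)
      linarith
  have T := ((tendsto_sum_dd (m'-c) hmc').sub (tendsto_sum_dd m' hm')).sub
    ((tendsto_sum_dd (m-c) hmc).sub (tendsto_sum_dd m hm))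
  have hlb : (0:ℝ) ≤ (LL (m'-c) - LL m') - (LL (m-c) - LL m) := by
    apply ge_of_tendsto T
    filter_upwards with N
    have key : ∀ z : ℝ, 0 < z →
        (∑ j ∈ Finset.range N, dd (z+j)) - (∑ j ∈ Finset.range N, dd ((z+c)+j))
          = ∑ j ∈ Finset.range N, (dd (z+j) - dd ((z+j)+c)) := by
      intro z hz
      rw [← Finset.sum_sub_distrib]
      apply Finset.sum_congr rfl
      intro j _
      congr 2
      ring
    have e1 : (∑ j ∈ Finset.range N, dd ((m'-c)+j)) - (∑ j ∈ Finset.range N, dd (m'+j))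
        = ∑ j ∈ Finset.range N, (dd ((m'-c)+j) - dd (((m'-c)+j)+c)) := by
      have := key (m'-c) hmc'
      rw [show m'-c+c = m' by ring] at this
      exact this
    have e2 : (∑ j ∈ Finset.range N, dd ((m-c)+j)) - (∑ j ∈ Finset.range N, dd (m+j))
        = ∑ j ∈ Finset.range N, (dd ((m-c)+j) - dd (((m-c)+j)+c)) := by
      have := key (m-c) hmc
      rw [show m-c+c = m by ring] at this
      exact this
    have hsum : ∑ j ∈ Finset.range N, (dd ((m-c)+j) - dd (((m-c)+j)+c))
        ≤ ∑ j ∈ Finset.range N, (dd ((m'-c)+j) - dd (((m'-c)+j)+c)) := by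
      apply Finset.sum_le_sum
      intro j _
      have hj : (0:ℝ) ≤ j := Nat.cast_nonneg j
      exact hphi (by simp only [Set.mem_Ioi]; linarith) (by simp only [Set.mem_Ioi]; linarith)
        (by linarith)
    linarith [e1, e2, hsum]
  linarith

lemma gamma_exp (x : ℝ) (hx : 0 < x) :
    Real.Gamma (x+1) = Real.exp (LL x + (x + 1/2) * Real.log x - x
      + Real.log (Real.sqrt (2*Real.pi))) := by
  have hG : (0:ℝ) < Real.Gamma (x+1) := Real.Gamma_pos_of_pos (by linarith)
  rw [← Real.exp_log hG]
  congr 1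
  unfold LL
  ring

lemma varphi_eq (n k : ℝ) (hk : 0 < k) (hkn : k < n) :
    varphi n k = Real.exp (LL n - LL k - LL (n-k)) / Real.sqrt (2*Real.pi) := by
  have hn : 0 < n := hk.trans hkn
  have hnk : 0 < n - k := by linarith
  have hsq : (0:ℝ) < Real.sqrt (2*Real.pi) := by positivity
  unfold varphi
  rw [gamma_exp n hn, gamma_exp k hk, gamma_exp (n-k) hnk,
    Real.rpow_def_of_pos hk, Real.rpow_def_of_pos hnk, Real.rpow_def_of_pos hn]
  simp only [← Real.exp_add, ← Real.exp_sub]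
  rw [show LL n + (n + 1/2) * Real.log n - n + Real.log (Real.sqrt (2*Real.pi))
      - (LL k + (k + 1/2) * Real.log k - k + Real.log (Real.sqrt (2*Real.pi))
        + (LL (n-k) + (n-k + 1/2) * Real.log (n-k) - (n-k) + Real.log (Real.sqrt (2*Real.pi))))
      + (Real.log k * (k + 1/2) + Real.log (n-k) * (n - k + 1/2) - Real.log n * (n + 1/2))
      = LL n - LL k - LL (n-k) - Real.log (Real.sqrt (2*Real.pi)) from by ring]
  rw [Real.exp_sub, Real.exp_log hsq]

lemma varphi21 : varphi 2 1 = 1 / Real.sqrt 8 := by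
  have hG3 : Real.Gamma 3 = 2 := by
    rw [show (3:ℝ) = ((2:ℕ):ℝ) + 1 by norm_num, Real.Gamma_nat_eq_factorial]
    norm_num [Nat.factorial]
  have hG2 : Real.Gamma 2 = 1 := Real.Gamma_two
  have h2r : (2:ℝ) ^ ((2:ℝ) + 1/2) = 4 * Real.sqrt 2 := by
    rw [Real.rpow_add (by norm_num : (0:ℝ) < 2), show ((2:ℝ)) = ((2:ℕ):ℝ) by norm_num]
    rw [Real.rpow_natCast]
    norm_num
    rw [show ((1:ℝ))/2 = 1/(2:ℝ) by norm_num, ← Real.sqrt_eq_rpow]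
  have hsq8 : Real.sqrt 8 = 2 * Real.sqrt 2 := by
    rw [show (8:ℝ) = 2^2 * 2 by norm_num, Real.sqrt_mul (by positivity),
      Real.sqrt_sq (by norm_num : (0:ℝ) ≤ 2)]
  have hs2 : (0:ℝ) < Real.sqrt 2 := by positivity
  unfold varphi
  rw [show (2:ℝ) - 1 = 1 by norm_num, show (2:ℝ) + 1 = 3 by norm_num,
    show (1:ℝ) + 1 = 2 by norm_num, hG3, hG2, Real.one_rpow, h2r, hsq8]
  rw [show (2:ℝ)/(1*1) = 2 by norm_num]
  rw [eq_div_iff (by positivity)]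
  field_simp
  nlinarith [Real.sq_sqrt (by norm_num : (0:ℝ) ≤ 2), hs2]

theorem varphi_bounds (n k : ℝ) (hk : 0 < k) (hkn : k < n) :
    (phiMinus n k < varphi n k ∧ varphi n k < phiPlus n k) ∧
    (1 ≤ k → k ≤ n - 1 →
      1 / Real.sqrt 8 ≤ varphi n k ∧ varphi n k < 1 / Real.sqrt (2 * Real.pi)) := by
  have hn : 0 < n := hk.trans hkn
  have hnk : 0 < n - k := by linarith
  have hsq : (0:ℝ) < Real.sqrt (2*Real.pi) := by positivity
  have hveq := varphi_eq n k hk hkn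
  have hA := lemA n k hk hkn
  have hB := lemB n k hk hkn
  refine ⟨⟨?_, ?_⟩, ?_⟩
  · rw [phiMinus, one_div_mul_eq_div, hveq]
    gcongr
  · rw [phiPlus, one_div_mul_eq_div, hveq]
    gcongr
  · intro h1k hk1n
    have hmono1 := LL_mono k (k+1) n hk (by linarith) (by linarith)
    have hmono2 := LL_mono 1 2 (k+1) one_pos (by norm_num) (by linarith)
    rw [show k+1-k = 1 by ring] at hmono1
    rw [show (2:ℝ)-1 = 1 by norm_num, show k+1-1 = k by ring] at hmono2
    have hF : LL 2 - LL 1 - LL 1 ≤ LL n - LL k - LL (n-k) := by linarith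
    constructor
    · have h21 : varphi 2 1 = Real.exp (LL 2 - LL 1 - LL 1) / Real.sqrt (2*Real.pi) := by
        have := varphi_eq 2 1 one_pos (by norm_num)
        rw [this, show (2:ℝ)-1 = 1 by norm_num]
      calc 1 / Real.sqrt 8 = Real.exp (LL 2 - LL 1 - LL 1) / Real.sqrt (2*Real.pi) := by
            rw [← h21, varphi21]
        _ ≤ Real.exp (LL n - LL k - LL (n-k)) / Real.sqrt (2*Real.pi) := by gcongr
        _ = varphi n k := hveq.symm
    · have hP : 1/(12*n+1) - 1/(12*k+1) - 1/(12*(n-k)+1) < 0 := by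
        have h1 : 1/(12*n+1) < 1/(12*k+1) := by
          apply one_div_lt_one_div_of_lt (by linarith) (by linarith)
        have h2 : 0 < 1/(12*(n-k)+1) := by positivity
        linarith
      have hexp : Real.exp (LL n - LL k - LL (n-k)) < 1 := by
        rw [show (1:ℝ) = Real.exp 0 from (Real.exp_zero).symm]
        exact Real.exp_lt_exp.mpr (by linarith)
      rw [hveq]
      rw [div_lt_div_iff₀ hsq hsq]
      nlinarith [hexp, hsq]
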